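/- Let Θ ∈ (l₀(ℤ^d))^{r×r}. If Θ is not strongly invertible, then there exists ξ₀ ∈ ℂ^d with det(\widehat{Θ}(ξ₀)) = 0, and consequently there exists a nonzero sequence u ∈ (l(ℤ^d))^{1×r} (built from the exponential sequence v(k) = e^{ik·ξ₀}) such that u * Θ = 0; hence the convolution operator C_Θ is not injective. -/

import Mathlib

open scoped BigOperators Classical
open Complex Matrix

noncomputable section

abbrev Zd (d : ℕ) := Fin d → ℤ
abbrev Rd (d : ℕ) := Fin d → ℝ

/-- real dot product `k·ξ` of an integer vector with a real vector -/
def dotZR {d : ℕ} (k : Zd d) (ξ : Rd d) : ℝ := ∑ j, (k j : ℝ) * ξ j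

/-- complex dot product of an integer vector with a complex vector -/
def dotZC {d : ℕ} (k : Zd d) (ξ : Fin d → ℂ) : ℂ := ∑ j, (k j : ℂ) * ξ j

/-- the symbol (Fourier series) `û(ξ) = Σ_k u(k) e^{-ik·ξ}` of a finitely supported
matrix-valued filter -/
def symbol {d r s : ℕ} (u : Zd d →₀ Matrix (Fin r) (Fin s) ℂ) (ξ : Rd d) :
    Matrix (Fin r) (Fin s) ℂ :=
  u.sum fun k A => Complex.exp (-(Complex.I * (dotZR k ξ : ℂ))) • A

/-- the symbol evaluated at a complex frequency `ξ ∈ ℂ^d` -/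
def symbolC {d r s : ℕ} (u : Zd d →₀ Matrix (Fin r) (Fin s) ℂ) (ξ : Fin d → ℂ) :
    Matrix (Fin r) (Fin s) ℂ :=
  u.sum fun k A => Complex.exp (-(Complex.I * dotZC k ξ)) • A

/-- symbol of a scalar filter -/
def symbolS {d : ℕ} (u : Zd d →₀ ℂ) (ξ : Rd d) : ℂ :=
  u.sum fun k c => Complex.exp (-(Complex.I * (dotZR k ξ : ℂ))) * c

/-- a filter is strongly invertible if the inverse of its symbol is again a matrix of
`2πℤ^d`-periodic trigonometric polynomials -/
def StronglyInvertible {d r : ℕ} (u : Zd d →₀ Matrix (Fin r) (Fin r) ℂ) : Prop :=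
  ∃ v : Zd d →₀ Matrix (Fin r) (Fin r) ℂ,
    ∀ ξ : Rd d, symbol u ξ * symbol v ξ = 1 ∧ symbol v ξ * symbol u ξ = 1

/-- convolution `[v * u](n) = Σ_k v(k) u(n-k)` of an arbitrary (row-vector valued)
sequence with a finitely supported matrix filter -/
def convSeq {d r s : ℕ} (v : Zd d → Matrix (Fin 1) (Fin r) ℂ)
    (u : Zd d →₀ Matrix (Fin r) (Fin s) ℂ) : Zd d → Matrix (Fin 1) (Fin s) ℂ :=
  fun n => u.sum fun k A => v (n - k) * A

/-- `f(ξ) = O(‖ξ‖^m)` as `ξ → 0`: all partial derivatives of total order `< m`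
vanish at the origin -/
def vanishesTo {d : ℕ} (m : ℕ) (f : Rd d → ℂ) : Prop :=
  ∀ j, j < m → iteratedFDeriv ℝ j f 0 = 0

/-- `M^T ξ` for an integer matrix `M` and a real vector `ξ` -/
def mulVecT {d : ℕ} (M : Matrix (Fin d) (Fin d) ℤ) (ξ : Rd d) : Rd d :=
  fun i => ∑ j, (M j i : ℝ) * ξ j

/-- `M k` for an integer matrix `M` and an integer vector `k` -/
def mulVecZ {d : ℕ} (M : Matrix (Fin d) (Fin d) ℤ) (k : Zd d) : Zd d :=
  fun i => ∑ j, M i j * k j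

/-- `Ω_M := (M^{-T} ℤ^d) ∩ [0,1)^d` -/
def OmegaSet {d : ℕ} (M : Matrix (Fin d) (Fin d) ℤ) : Set (Rd d) :=
  {ω | (∀ i, ∃ z : ℤ, mulVecT M ω i = (z : ℝ)) ∧ ∀ i, 0 ≤ ω i ∧ ω i < 1}

/-- a dilation matrix: an integer matrix all of whose (complex) eigenvalues
are greater than one in modulus -/
def IsDilation {d : ℕ} (M : Matrix (Fin d) (Fin d) ℤ) : Prop :=
  ∀ μ ∈ spectrum ℂ (M.map fun z => (z : ℂ)), 1 < ‖μ‖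

/-- `a` has order `m` sum rules with respect to `M` with matching filter `vgu` -/
def HasSumRules {d r : ℕ} (M : Matrix (Fin d) (Fin d) ℤ) (m : ℕ)
    (a : Zd d →₀ Matrix (Fin r) (Fin r) ℂ)
    (vgu : Zd d →₀ Matrix (Fin 1) (Fin r) ℂ) : Prop :=
  symbol vgu 0 ≠ 0 ∧
  ∀ ω ∈ OmegaSet M, ∀ i : Fin r,
    vanishesTo m (fun ξ =>
      (symbol vgu (mulVecT M ξ) * symbol a (ξ + (2 * Real.pi) • ω)) 0 i -
      (if ω = (0 : Rd d) then 1 else 0) * (symbol vgu ξ) 0 i)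

/-- the symbol of the `γ`-coset sequence `u^{[γ;M]}(k) = u(γ + Mk)` -/
def cosetSymbol {d r s : ℕ} (M : Matrix (Fin d) (Fin d) ℤ)
    (u : Zd d → Matrix (Fin r) (Fin s) ℂ) (γ : Zd d) (ξ : Rd d) :
    Matrix (Fin r) (Fin s) ℂ :=
  ∑ᶠ p : Zd d, Complex.exp (-(Complex.I * (dotZR p ξ : ℂ))) • u (γ + mulVecZ M p)

/-- scalar version of the coset symbol -/
def cosetSymbolF {d : ℕ} (N : Matrix (Fin d) (Fin d) ℤ) (u : Zd d → ℂ) (γ : Zd d)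
    (ξ : Rd d) : ℂ :=
  ∑ᶠ p : Zd d, Complex.exp (-(Complex.I * (dotZR p ξ : ℂ))) * u (γ + mulVecZ N p)

/-- subdivision operator `S_{u,M} w = |det M|^{1/2} (w↑M) * u` -/
def sdOp {d p q : ℕ} (M : Matrix (Fin d) (Fin d) ℤ) (u : Zd d →₀ Matrix (Fin p) (Fin q) ℂ)
    (w : Zd d → Matrix (Fin 1) (Fin p) ℂ) : Zd d → Matrix (Fin 1) (Fin q) ℂ :=
  fun n => (Real.sqrt (M.det.natAbs) : ℂ) • ∑ᶠ k : Zd d, w k * u (n - mulVecZ M k)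

/-- transition operator `T_{u,M} v = |det M|^{1/2} (v * u^*)(M·)` -/
def tzOp {d p q : ℕ} (M : Matrix (Fin d) (Fin d) ℤ) (u : Zd d →₀ Matrix (Fin p) (Fin q) ℂ)
    (v : Zd d → Matrix (Fin 1) (Fin q) ℂ) : Zd d → Matrix (Fin 1) (Fin p) ℂ :=
  fun n => (Real.sqrt (M.det.natAbs) : ℂ) • ∑ᶠ k : Zd d, v k * (u (k - mulVecZ M n))ᴴ

/-- a polynomial sequence of (total) degree at most `m` -/
def IsPolySeq {d : ℕ} (m : ℕ) (p : Zd d → ℂ) : Prop :=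
  ∃ P : MvPolynomial (Fin d) ℂ, P.totalDegree ≤ m ∧
    ∀ k : Zd d, p k = MvPolynomial.eval (fun j => (k j : ℂ)) P

/-- a polynomial sequence of (total) degree less than `m` -/
def IsPolySeqLt {d : ℕ} (m : ℕ) (p : Zd d → ℂ) : Prop :=
  ∃ P : MvPolynomial (Fin d) ℂ, P.totalDegree < m ∧
    ∀ k : Zd d, p k = MvPolynomial.eval (fun j => (k j : ℂ)) P

/-- convolution `p * y` of a (scalar) polynomial sequence with a finitely supported
row-vector filter -/
def polyConv {d r : ℕ} (p : Zd d → ℂ) (y : Zd d →₀ Matrix (Fin 1) (Fin r) ℂ) :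
    Zd d → Matrix (Fin 1) (Fin r) ℂ :=
  fun n => y.sum fun j A => p (n - j) • A

/-- the standard vector conversion operator `E_N` associated with `N` and the coset
representatives `s` -/
def ENop {d r : ℕ} (N : Matrix (Fin d) (Fin d) ℤ) (s : Fin r → Zd d)
    (v : Zd d → ℂ) : Zd d → Matrix (Fin 1) (Fin r) ℂ :=
  fun k => Matrix.of fun _ j => v (mulVecZ N k + s j)

/-- the row vector `Υ_N(ξ) = (e^{i N^{-1} s_1 · ξ}, …, e^{i N^{-1} s_r · ξ})` -/
def UpsN {d r : ℕ} (N : Matrix (Fin d) (Fin d) ℤ) (s : Fin r → Zd d) (ξ : Rd d) :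
    Matrix (Fin 1) (Fin r) ℂ :=
  Matrix.of fun _ j => Complex.exp (Complex.I *
    ((∑ t, ((N.map fun z => (z : ℝ))⁻¹.mulVec fun i => (s j i : ℝ)) t * ξ t : ℝ) : ℂ))

/-- the sequence `∇^β δ`, whose symbol is `Π_j (1 - e^{-iξ_j})^{β_j}` -/
def nablaDelta {d : ℕ} (β : Fin d → ℕ) : Zd d → ℂ :=
  fun k => ∏ j, if 0 ≤ k j then ((-1 : ℂ) ^ (k j).toNat * ((β j).choose (k j).toNat : ℂ)) else 0

/-- the matrix `F_{r;M}(ξ) = (e^{-i γ_l · (ξ + 2π ω_k)} I_r)_{l,k}` -/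
def FMat {d r n : ℕ} (γ : Fin n → Zd d) (ω : Fin n → Rd d) (ξ : Rd d) :
    Matrix (Fin n × Fin r) (Fin n × Fin r) ℂ :=
  Matrix.of fun li kj =>
    if li.2 = kj.2 then
      Complex.exp (-(Complex.I * (dotZR (γ li.1) (ξ + (2 * Real.pi) • ω kj.1) : ℂ)))
    else 0

/-- the matrix `D_{u,ω;M}(ξ)` whose `(l,k)`-th `r×r` block is `û(ξ+2πω)` when
`ω_l + ω - ω_k ∈ ℤ^d` and `0` otherwise -/
def DMat {d r n : ℕ} (u : Zd d →₀ Matrix (Fin r) (Fin r) ℂ) (ω : Fin n → Rd d)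
    (ωv : Rd d) (ξ : Rd d) : Matrix (Fin n × Fin r) (Fin n × Fin r) ℂ :=
  Matrix.of fun li kj =>
    if ∀ i, ∃ z : ℤ, (ω li.1 + ωv - ω kj.1) i = (z : ℝ) then
      symbol u (ξ + (2 * Real.pi) • ωv) li.2 kj.2
    else 0

/-- the matrix `E_{u,ω;M}(ξ)` whose `(l,k)`-th block is `û^{[γ_k-γ_l;M]}(ξ) e^{-iγ_k·(2πω)}` -/
def EMat {d r n : ℕ} (M : Matrix (Fin d) (Fin d) ℤ)
    (u : Zd d →₀ Matrix (Fin r) (Fin r) ℂ) (γ : Fin n → Zd d)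
    (ωv : Rd d) (ξ : Rd d) : Matrix (Fin n × Fin r) (Fin n × Fin r) ℂ :=
  Matrix.of fun li kj =>
    (Complex.exp (-(Complex.I * (dotZR (γ kj.1) ((2 * Real.pi) • ωv) : ℂ))) •
      cosetSymbol M (fun k => u k) (γ kj.1 - γ li.1) ξ) li.2 kj.2

/-- the matrix `P_{u;M}(ξ) = [û(ξ+2πω_1), …, û(ξ+2πω_{d_M})]` -/
def PMat {d r sc n : ℕ} (u : Zd d →₀ Matrix (Fin sc) (Fin r) ℂ) (ω : Fin n → Rd d)
    (ξ : Rd d) : Matrix (Fin sc) (Fin n × Fin r) ℂ :=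
  Matrix.of fun i kj => symbol u (ξ + (2 * Real.pi) • ω kj.1) i kj.2

/-- the matrix `Q_{u;M}(ξ) = [û^{[γ_1;M]}(ξ), …, û^{[γ_{d_M};M]}(ξ)]` -/
def QMat {d r sc n : ℕ} (M : Matrix (Fin d) (Fin d) ℤ)
    (u : Zd d →₀ Matrix (Fin sc) (Fin r) ℂ) (γ : Fin n → Zd d)
    (ξ : Rd d) : Matrix (Fin sc) (Fin n × Fin r) ℂ :=
  Matrix.of fun i kj => cosetSymbol M (fun k => u k) (γ kj.1) ξ i kj.2

/-- `j`-fold application of the transition operator with low-pass filter `a`: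
the low-pass framelet coefficients `v_j` -/
def tzIter {d r : ℕ} (M : Matrix (Fin d) (Fin d) ℤ)
    (a : Zd d →₀ Matrix (Fin r) (Fin r) ℂ)
    (v0 : Zd d → Matrix (Fin 1) (Fin r) ℂ) : ℕ → Zd d → Matrix (Fin 1) (Fin r) ℂ
  | 0 => v0
  | j + 1 => tzOp M a (tzIter M a v0 j)

/-- reconstruction: `reconIter … J i = ṽ_{J-i}` for the `J`-level discrete framelet
transform with filter bank `({a;b},{atil;btil})_Θ` applied to input `v0` -/
def reconIter {d r sc : ℕ} (M : Matrix (Fin d) (Fin d) ℤ)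
    (a : Zd d →₀ Matrix (Fin r) (Fin r) ℂ) (b : Zd d →₀ Matrix (Fin sc) (Fin r) ℂ)
    (atil : Zd d →₀ Matrix (Fin r) (Fin r) ℂ) (btil : Zd d →₀ Matrix (Fin sc) (Fin r) ℂ)
    (Θ : Zd d →₀ Matrix (Fin r) (Fin r) ℂ)
    (v0 : Zd d → Matrix (Fin 1) (Fin r) ℂ) (J : ℕ) : ℕ → Zd d → Matrix (Fin 1) (Fin r) ℂ
  | 0 => convSeq (tzIter M a v0 J) Θ
  | i + 1 => fun n =>
      sdOp M atil (reconIter M a b atil btil Θ v0 J i) n +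
      sdOp M btil (tzOp M b (tzIter M a v0 (J - i - 1))) n

/-- the `J`-level discrete framelet transform has the perfect reconstruction property:
every input `v0` is exactly and uniquely recovered via the deconvolution `x * Θ = ṽ_0` -/
def PerfectReconstruction {d r sc : ℕ} (M : Matrix (Fin d) (Fin d) ℤ)
    (a : Zd d →₀ Matrix (Fin r) (Fin r) ℂ) (b : Zd d →₀ Matrix (Fin sc) (Fin r) ℂ)
    (atil : Zd d →₀ Matrix (Fin r) (Fin r) ℂ) (btil : Zd d →₀ Matrix (Fin sc) (Fin r) ℂ)
    (Θ : Zd d →₀ Matrix (Fin r) (Fin r) ℂ) (J : ℕ) : Prop :=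
  ∀ v0 : Zd d → Matrix (Fin 1) (Fin r) ℂ,
    convSeq v0 Θ = reconIter M a b atil btil Θ v0 J J ∧
    ∀ x, convSeq x Θ = reconIter M a b atil btil Θ v0 J J → x = v0

namespace Stmt1Aux
abbrev Rng (d : ℕ) := AddMonoidAlgebra ℂ (Zd d)

lemma dotZC_add {d : ℕ} (a b : Zd d) (ξ : Fin d → ℂ) :
    dotZC (a + b) ξ = dotZC a ξ + dotZC b ξ := by
  simp [dotZC, ← Finset.sum_add_distrib]
  congr 1; funext j; ring

lemma dotZC_sub {d : ℕ} (a b : Zd d) (ξ : Fin d → ℂ) :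
    dotZC (a - b) ξ = dotZC a ξ - dotZC b ξ := by
  simp [dotZC, ← Finset.sum_sub_distrib]
  congr 1; funext j; ring

lemma dotZC_zero {d : ℕ} (ξ : Fin d → ℂ) : dotZC (0 : Zd d) ξ = 0 := by simp [dotZC]

def expChar {d : ℕ} (ξ : Fin d → ℂ) : Multiplicative (Zd d) →* ℂ where
  toFun k := Complex.exp (-(Complex.I * dotZC (Multiplicative.toAdd k) ξ))
  map_one' := by simp [dotZC]
  map_mul' a b := by
    simp only [← Complex.exp_add]
    congr 1
    have : Multiplicative.toAdd (a * b) = Multiplicative.toAdd a + Multiplicative.toAdd b := rfl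
    rw [this, dotZC_add]; ring

def evalF {d : ℕ} (ξ : Fin d → ℂ) : Rng d →ₐ[ℂ] ℂ :=
  AddMonoidAlgebra.lift ℂ ℂ (Zd d) (expChar ξ)

lemma evalF_single {d : ℕ} (ξ : Fin d → ℂ) (k : Zd d) (c : ℂ) :
    evalF ξ (AddMonoidAlgebra.single k c) = Complex.exp (-(Complex.I * dotZC k ξ)) * c := by
  rw [evalF, AddMonoidAlgebra.lift_single]
  simp [expChar, smul_eq_mul]; ring

variable {d r s : ℕ}

def toMat (u : Zd d →₀ Matrix (Fin r) (Fin s) ℂ) : Matrix (Fin r) (Fin s) (Rng d) :=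
  Matrix.of fun i j => u.sum fun k A => AddMonoidAlgebra.single k (A i j)

lemma symbolC_apply (u : Zd d →₀ Matrix (Fin r) (Fin s) ℂ) (ξ : Fin d → ℂ) (i : Fin r) (j : Fin s) :
    symbolC u ξ i j = u.sum fun k A => Complex.exp (-(Complex.I * dotZC k ξ)) * A i j := by
  rw [symbolC, Finsupp.sum, Finsupp.sum]
  rw [Matrix.sum_apply]
  simp [Matrix.smul_apply, smul_eq_mul]

lemma symbol_eq_symbolC (u : Zd d →₀ Matrix (Fin r) (Fin s) ℂ) (ξ : Rd d) :
    symbol u ξ = symbolC u (fun j => (ξ j : ℂ)) := by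
  rw [symbol, symbolC]
  congr 1; funext k A
  congr 3
  simp [dotZR, dotZC]

lemma evalF_toMat (ξ : Fin d → ℂ) (u : Zd d →₀ Matrix (Fin r) (Fin s) ℂ) :
    (toMat u).map (evalF ξ) = symbolC u ξ := by
  ext i j
  rw [Matrix.map_apply, toMat, Matrix.of_apply, map_finsuppSum, symbolC_apply]
  exact Finsupp.sum_congr fun k _ => evalF_single ξ k _

def iota : MvPolynomial (Fin d) ℂ →ₐ[ℂ] Rng d :=
  MvPolynomial.aeval (fun i => AddMonoidAlgebra.single (Pi.single i 1) 1)

lemma iota_monomial (μ : Fin d →₀ ℕ) (c : ℂ) :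
    iota (MvPolynomial.monomial μ c) =
      AddMonoidAlgebra.single (fun j => (μ j : ℤ)) c := by
  rw [iota, MvPolynomial.aeval_monomial]
  have h1 : ∀ i : Fin d, ∀ n : ℕ,
      (AddMonoidAlgebra.single (Pi.single i 1 : Zd d) (1:ℂ)) ^ n
        = AddMonoidAlgebra.single (Pi.single i (n:ℤ)) 1 := by
    intro i n
    rw [AddMonoidAlgebra.single_pow]
    congr 1
    · ext j
      simp [Pi.single_apply]
    · simp
  have h2 : (μ.prod fun i k => (AddMonoidAlgebra.single (Pi.single i 1 : Zd d) (1:ℂ)) ^ k)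
      = AddMonoidAlgebra.single (fun j => (μ j : ℤ)) 1 := by
    rw [Finsupp.prod]
    rw [Finset.prod_congr rfl (fun i _ => h1 i (μ i))]
    rw [AddMonoidAlgebra.prod_single]
    congr 1
    · funext j
      rw [Finset.sum_apply]
      have := Finset.sum_pi_single j (fun i => (μ i : ℤ)) μ.support
      rw [this]
      by_cases hj : j ∈ μ.support
      · simp [hj]
      · simp [hj, Finsupp.notMem_support_iff.mp hj]
    · simp
  rw [h2]
  have : (algebraMap ℂ (Rng d)) c = AddMonoidAlgebra.single 0 c := rfl
  rw [this, AddMonoidAlgebra.single_mul_single]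
  simp

lemma isUnit_single (g : Zd d) : IsUnit (AddMonoidAlgebra.single g (1:ℂ) : Rng d) := by
  refine IsUnit.of_mul_eq_one (AddMonoidAlgebra.single (-g) 1) ?_
  rw [AddMonoidAlgebra.single_mul_single]
  simp [AddMonoidAlgebra.one_def]

/-- the coefficient finsupp of an element of `Rng d` -/
def coeffs (x : Rng d) : Zd d →₀ ℂ := x.coeff

lemma sum_single_coeffs (x : Rng d) :
    ((coeffs x).sum fun g c => AddMonoidAlgebra.single g c) = x :=
  AddMonoidAlgebra.sum_coeff_single x

/-- every Laurent element with nonnegative support comes from a polynomial -/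
lemma exists_poly (E : Rng d) (hE : ∀ g ∈ (coeffs E).support, ∀ j, 0 ≤ g j) :
    ∃ P : MvPolynomial (Fin d) ℂ, iota P = E := by
  refine ⟨∑ g ∈ (coeffs E).support,
    MvPolynomial.monomial (Finsupp.equivFunOnFinite.symm fun j => (g j).toNat) (coeffs E g), ?_⟩
  rw [map_sum]
  rw [Finset.sum_congr rfl (fun g hg => ?_)]
  · conv_rhs => rw [← sum_single_coeffs E]
    rw [Finsupp.sum]
  · rw [iota_monomial]
    congr 1
    funext j
    simp only [Finsupp.coe_equivFunOnFinite_symm]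
    exact Int.toNat_of_nonneg (hE g hg j)

lemma evalF_iota (ξ : Fin d → ℂ) (P : MvPolynomial (Fin d) ℂ) :
    evalF ξ (iota P) = MvPolynomial.eval (fun i => Complex.exp (-(Complex.I * ξ i))) P := by
  have h : (evalF ξ).comp iota
      = MvPolynomial.aeval (fun i => evalF ξ (AddMonoidAlgebra.single (Pi.single i 1) 1)) :=
    MvPolynomial.comp_aeval _ _
  have h2 : ∀ i, evalF ξ (AddMonoidAlgebra.single (Pi.single i 1) (1:ℂ))
      = Complex.exp (-(Complex.I * ξ i)) := by
    intro i
    rw [evalF_single]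
    have : dotZC (Pi.single i 1) ξ = ξ i := by
      rw [dotZC, Finset.sum_eq_single i]
      · simp
      · intro b _ hb; simp [Pi.single_apply, hb]
      · simp
    rw [this, mul_one]
  calc evalF ξ (iota P) = ((evalF ξ).comp iota) P := rfl
    _ = MvPolynomial.aeval (fun i => evalF ξ (AddMonoidAlgebra.single (Pi.single i 1) 1)) P := by
        rw [h]
    _ = _ := by rw [funext h2]; rfl

theorem isUnit_of_nonvanishing (D : Rng d) (hD : ∀ ξ : Fin d → ℂ, evalF ξ D ≠ 0) :
    IsUnit D := by
  classical
  set κ : Zd d := fun j => (((coeffs D).support.sup fun g => (-(g j)).toNat : ℕ) : ℤ) with hκ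
  set E : Rng d := AddMonoidAlgebra.single κ 1 * D with hE
  have hcoE : ∀ g, coeffs E g = coeffs D (-κ + g) := by
    intro g
    have h' := AddMonoidAlgebra.coeff_single_mul_add D (1:ℂ) κ (-κ + g)
    rw [add_neg_cancel_left, one_mul] at h'
    exact h'
  have hsupp : ∀ g ∈ (coeffs E).support, ∀ j, 0 ≤ g j := by
    intro g hg j
    have hg' : coeffs D (-κ + g) ≠ 0 := by
      rw [← hcoE]; exact Finsupp.mem_support_iff.mp hg
    have hmem : (-κ + g) ∈ (coeffs D).support := Finsupp.mem_support_iff.mpr hg'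
    have hle : (-( (-κ + g) j)).toNat ≤ (coeffs D).support.sup fun g => (-(g j)).toNat :=
      Finset.le_sup (f := fun g : Zd d => (-(g j)).toNat) hmem
    have h1 : -((-κ + g) j) ≤ ((-( (-κ + g) j)).toNat : ℤ) := Int.self_le_toNat _
    have h2 : -((-κ + g) j) ≤ κ j := by
      refine h1.trans ?_
      simp only [hκ]
      exact_mod_cast hle
    have e : -((-κ + g) j) = κ j - g j := by
      simp only [Pi.add_apply, Pi.neg_apply]; ring
    rw [e] at h2
    linarith
  obtain ⟨P, hP⟩ := exists_poly E hsupp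
  have hEval : ∀ ξ : Fin d → ℂ, evalF ξ E ≠ 0 := by
    intro ξ
    rw [hE, _root_.map_mul]
    exact mul_ne_zero (by rw [evalF_single]; simp [Complex.exp_ne_zero]) (hD ξ)
  have hq : (∏ j : Fin d, (MvPolynomial.X j : MvPolynomial (Fin d) ℂ)) ∈
      MvPolynomial.vanishingIdeal ℂ (MvPolynomial.zeroLocus ℂ (Ideal.span {P})) := by
    rw [MvPolynomial.mem_vanishingIdeal_iff]
    intro x hx
    have hPx : MvPolynomial.eval x P = 0 :=
      by simpa [MvPolynomial.coe_aeval_eq_eval] using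
        (MvPolynomial.mem_zeroLocus_iff.mp hx) P (Ideal.subset_span rfl)
    rw [map_prod]
    by_contra hne
    have hall : ∀ j, x j ≠ 0 := by
      intro j hj
      exact hne (Finset.prod_eq_zero (Finset.mem_univ j) (by simpa using hj))
    set ξ : Fin d → ℂ := fun j => Complex.I * Complex.log (x j) with hξ
    have hxξ : ∀ j, Complex.exp (-(Complex.I * ξ j)) = x j := by
      intro j
      rw [hξ]
      have : -(Complex.I * (Complex.I * Complex.log (x j))) = Complex.log (x j) := by
        rw [← mul_assoc, Complex.I_mul_I]; ring
      rw [this, Complex.exp_log (hall j)]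
    have := hEval ξ
    rw [← hP, evalF_iota, funext hxξ] at this
    exact this hPx
  rw [MvPolynomial.vanishingIdeal_zeroLocus_eq_radical, Ideal.mem_radical_iff] at hq
  obtain ⟨m, hm⟩ := hq
  rw [Ideal.mem_span_singleton] at hm
  have hdvd : iota P ∣ iota ((∏ j : Fin d, MvPolynomial.X j) ^ m) := map_dvd _ hm
  have hun : IsUnit (iota ((∏ j : Fin d, (MvPolynomial.X j : MvPolynomial (Fin d) ℂ)) ^ m)) := by
    rw [map_pow, map_prod]
    refine IsUnit.pow m ?_
    have hX : ∀ j : Fin d, iota (MvPolynomial.X j : MvPolynomial (Fin d) ℂ)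
        = AddMonoidAlgebra.single (Pi.single j 1) 1 := fun j => MvPolynomial.aeval_X _ j
    rw [Finset.prod_congr rfl (fun j _ => hX j), AddMonoidAlgebra.prod_single]
    simpa using isUnit_single (∑ j : Fin d, Pi.single j 1)
  have hunE : IsUnit E := by
    rw [← hP]
    exact isUnit_of_dvd_unit hdvd hun
  refine isUnit_of_dvd_unit ?_ hunE
  exact ⟨AddMonoidAlgebra.single κ 1, by rw [hE]; ring⟩

/-- support finset for a matrix over `Rng d` -/
def suppU (V : Matrix (Fin r) (Fin s) (Rng d)) : Finset (Zd d) :=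
  Finset.univ.biUnion fun p : Fin r × Fin s => (coeffs (V p.1 p.2)).support

def fromMat (V : Matrix (Fin r) (Fin s) (Rng d)) : Zd d →₀ Matrix (Fin r) (Fin s) ℂ :=
  Finsupp.onFinset (suppU V) (fun k => Matrix.of fun i j => coeffs (V i j) k) (by
    intro k hk
    by_contra hns
    apply hk
    ext i j
    simp only [Matrix.of_apply, Matrix.zero_apply]
    by_contra hc
    exact hns (Finset.mem_biUnion.mpr ⟨(i, j), Finset.mem_univ _,
      Finsupp.mem_support_iff.mpr hc⟩))

lemma symbolC_fromMat (V : Matrix (Fin r) (Fin s) (Rng d)) (ξ : Fin d → ℂ) :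
    symbolC (fromMat V) ξ = V.map (evalF ξ) := by
  ext i j
  rw [symbolC_apply, Matrix.map_apply]
  have hsub : (fromMat V).support ⊆ suppU V := Finsupp.support_onFinset_subset
  have hL : (fromMat V).sum (fun k A => Complex.exp (-(Complex.I * dotZC k ξ)) * A i j)
      = ∑ k ∈ suppU V, Complex.exp (-(Complex.I * dotZC k ξ)) * coeffs (V i j) k := by
    rw [Finsupp.sum_of_support_subset _ hsub _ (by simp)]
    refine Finset.sum_congr rfl fun k _ => ?_
    congr 1
  have hR : evalF ξ (V i j)
      = ∑ k ∈ suppU V, Complex.exp (-(Complex.I * dotZC k ξ)) * coeffs (V i j) k := by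
    conv_lhs => rw [← sum_single_coeffs (V i j)]
    rw [map_finsuppSum]
    have hsub2 : (coeffs (V i j)).support ⊆ suppU V :=
      fun k hk => Finset.mem_biUnion.mpr ⟨(i, j), Finset.mem_univ _, hk⟩
    rw [Finsupp.sum_of_support_subset _ hsub2 _ (by simp)]
    exact Finset.sum_congr rfl fun k _ => evalF_single ξ k _
  rw [hL, hR]

lemma exists_det_zero (Θ : Zd d →₀ Matrix (Fin r) (Fin r) ℂ)
    (h : ¬ StronglyInvertible Θ) : ∃ ξ₀ : Fin d → ℂ, (symbolC Θ ξ₀).det = 0 := by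
  by_contra hno
  push_neg at hno
  apply h
  have hD : ∀ ξ : Fin d → ℂ, evalF ξ ((toMat Θ).det) ≠ 0 := by
    intro ξ
    have : evalF ξ ((toMat Θ).det) = ((toMat Θ).map (evalF ξ)).det :=
      RingHom.map_det (evalF ξ).toRingHom (toMat Θ)
    rw [this, evalF_toMat]
    exact hno ξ
  have hUnit : IsUnit ((toMat Θ).det) := isUnit_of_nonvanishing _ hD
  refine ⟨fromMat (toMat Θ)⁻¹, fun ξ => ?_⟩
  have key : ∀ ξ' : Fin d → ℂ,
      symbolC Θ ξ' * symbolC (fromMat (toMat Θ)⁻¹) ξ' = 1 ∧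
      symbolC (fromMat (toMat Θ)⁻¹) ξ' * symbolC Θ ξ' = 1 := by
    intro ξ'
    rw [symbolC_fromMat, ← evalF_toMat ξ' Θ]
    have hc : ⇑(evalF ξ').toRingHom = ⇑(evalF ξ') := rfl
    constructor
    · rw [← hc, ← Matrix.map_mul, Matrix.mul_nonsing_inv _ hUnit]
      exact Matrix.map_one _ (map_zero _) (map_one _)
    · rw [← hc, ← Matrix.map_mul, Matrix.nonsing_inv_mul _ hUnit]
      exact Matrix.map_one _ (map_zero _) (map_one _)
  rw [symbol_eq_symbolC, symbol_eq_symbolC]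
  exact key _

end Stmt1Aux

/-- if `Θ` is not strongly invertible, then its symbol degenerates at some
complex frequency `ξ₀` and a nonzero sequence built from the exponential sequence
`v(k) = e^{ik·ξ₀}` is annihilated by convolution with `Θ`; hence `C_Θ` is not injective. -/
theorem stmt1 {d r : ℕ} (Θ : Zd d →₀ Matrix (Fin r) (Fin r) ℂ)
    (h : ¬ StronglyInvertible Θ) :
    ∃ ξ₀ : Fin d → ℂ, (symbolC Θ ξ₀).det = 0 ∧
      (∃ u : Zd d → Matrix (Fin 1) (Fin r) ℂ,
        (∃ w : Matrix (Fin 1) (Fin r) ℂ, ∀ k : Zd d,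
          u k = Complex.exp (Complex.I * dotZC k ξ₀) • w) ∧
        u ≠ 0 ∧ convSeq u Θ = 0) ∧
      ¬ Function.Injective (fun v : Zd d → Matrix (Fin 1) (Fin r) ℂ => convSeq v Θ) := by
  classical
  obtain ⟨ξ₀, hdet⟩ := Stmt1Aux.exists_det_zero Θ h
  obtain ⟨v, hv0, hvM⟩ := Matrix.exists_vecMul_eq_zero_iff.mpr hdet
  set w : Matrix (Fin 1) (Fin r) ℂ := Matrix.of fun _ j => v j with hw
  have hwne : w ≠ 0 := by
    intro hww
    apply hv0
    funext i
    have := congrFun (congrFun hww 0) i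
    simpa [hw] using this
  have hwS : w * symbolC Θ ξ₀ = 0 := by
    ext a j
    have hj := congrFun hvM j
    simp only [Matrix.vecMul, dotProduct, Pi.zero_apply] at hj
    simp only [Matrix.mul_apply, hw, Matrix.of_apply, Matrix.zero_apply]
    exact hj
  set u : Zd d → Matrix (Fin 1) (Fin r) ℂ :=
    fun k => Complex.exp (Complex.I * dotZC k ξ₀) • w with hu
  have hune : u ≠ 0 := by
    intro h0
    apply hwne
    have := congrFun h0 0
    simpa [hu, Stmt1Aux.dotZC_zero] using this
  have hconv : convSeq u Θ = 0 := by
    funext n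
    have key : convSeq u Θ n = Complex.exp (Complex.I * dotZC n ξ₀) • (w * symbolC Θ ξ₀) := by
      rw [convSeq, symbolC, Finsupp.sum, Finsupp.sum, Matrix.mul_sum, Finset.smul_sum]
      refine Finset.sum_congr rfl fun k _ => ?_
      show Complex.exp (Complex.I * dotZC (n - k) ξ₀) • w * Θ k = _
      rw [Matrix.smul_mul, Matrix.mul_smul, smul_smul, ← Complex.exp_add]
      congr 2
      rw [Stmt1Aux.dotZC_sub]
      ring
    rw [key, hwS, smul_zero]
    rfl
  refine ⟨ξ₀, hdet, ⟨u, ⟨w, fun k => rfl⟩, hune, hconv⟩, ?_⟩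
  intro hinj
  have hzero : convSeq (0 : Zd d → Matrix (Fin 1) (Fin r) ℂ) Θ = 0 := by
    funext n
    rw [convSeq, Finsupp.sum]
    simp
  exact hune (hinj (by simpa [hzero] using hconv : convSeq u Θ = convSeq 0 Θ))

end
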